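/- Let z ∈ ℂ and let k, n ∈ ℕ₀ with k ≤ n. Then |(k+z)_{n−k}| ≤ (1+n)^{|z|} · n! / k!. -/

import Mathlib

/-- The Pochhammer symbol `(z)_n = z (z+1) ⋯ (z+n-1)`. -/
noncomputable def poch (z : ℂ) (n : ℕ) : ℂ := ∏ i ∈ Finset.range n, (z + i)

lemma poch_key (a t : ℝ) (ha : 1 ≤ a) (ht : 0 ≤ t) :
    a - 1 + t ≤ a * ((a + 1) / a) ^ t := by
  have ha0 : (0 : ℝ) < a := lt_of_lt_of_le one_pos ha
  rcases le_total t 1 with h | h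
  · have h1 : (1 : ℝ) ≤ (a + 1) / a := by
      rw [le_div_iff₀ ha0]; linarith
    have h2 : (1 : ℝ) ≤ ((a + 1) / a) ^ t := Real.one_le_rpow h1 ht
    nlinarith
  · have hb : (1 : ℝ) + t * (1 / a) ≤ (1 + 1 / a) ^ t :=
      one_add_mul_self_le_rpow_one_add (le_trans (by norm_num) (by positivity : (0:ℝ) ≤ 1 / a)) h
    have he : (a + 1) / a = 1 + 1 / a := by field_simp
    rw [he]
    have := mul_le_mul_of_nonneg_left hb (le_of_lt ha0)
    calc a - 1 + t ≤ a + t := by linarith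
      _ = a * (1 + t * (1 / a)) := by field_simp
      _ ≤ a * (1 + 1 / a) ^ t := this

lemma poch_real_bound (t : ℝ) (ht : 0 ≤ t) (d k : ℕ) :
    ∏ i ∈ Finset.range d, ((k : ℝ) + i + t) ≤
      (1 + ((k + d : ℕ) : ℝ)) ^ t * ((k + d).factorial / k.factorial : ℝ) := by
  induction d with
  | zero =>
    simp only [Finset.range_zero, Finset.prod_empty, Nat.add_zero]
    have h1 : (1 : ℝ) ≤ (1 + (k : ℝ)) ^ t :=
      Real.one_le_rpow (le_add_of_nonneg_right (Nat.cast_nonneg k)) ht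
    have h2 : ((k.factorial : ℝ) / k.factorial) = 1 := div_self (by positivity)
    rw [h2, mul_one]; exact h1
  | succ d ih =>
    rw [Finset.prod_range_succ]
    have hfac : (0 : ℝ) < (k.factorial : ℝ) := by positivity
    have hterm : (0 : ℝ) ≤ (k : ℝ) + d + t := by positivity
    set a : ℝ := (k : ℝ) + d + 1 with ha_def
    have ha1 : (1 : ℝ) ≤ a := by simp [ha_def]; positivity
    have hkey : a - 1 + t ≤ a * ((a + 1) / a) ^ t := poch_key a t ha1 ht
    have ha0 : (0 : ℝ) < a := lt_of_lt_of_le one_pos ha1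
    have hprod_nonneg : (0 : ℝ) ≤ ∏ i ∈ Finset.range d, ((k : ℝ) + i + t) :=
      Finset.prod_nonneg (fun i _ => by positivity)
    have hrw : (k : ℝ) + d + t = a - 1 + t := by rw [ha_def]; ring
    calc (∏ i ∈ Finset.range d, ((k : ℝ) + i + t)) * ((k : ℝ) + d + t)
        ≤ ((1 + ((k + d : ℕ) : ℝ)) ^ t * ((k + d).factorial / k.factorial : ℝ)) *
            (a * ((a + 1) / a) ^ t) := by
          apply mul_le_mul ih (by rw [hrw]; exact hkey) hterm
          positivity
      _ = (1 + ((k + (d + 1) : ℕ) : ℝ)) ^ t * ((k + (d + 1)).factorial / k.factorial : ℝ) := by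
          have h1 : (1 : ℝ) + ((k + d : ℕ) : ℝ) = a := by push_cast [ha_def]; ring
          have h2 : (1 : ℝ) + ((k + (d + 1) : ℕ) : ℝ) = a + 1 := by push_cast [ha_def]; ring
          have h3 : ((k + (d + 1)).factorial : ℝ) = a * ((k + d).factorial : ℝ) := by
            have : k + (d + 1) = (k + d) + 1 := by ring
            rw [this, Nat.factorial_succ]
            push_cast [ha_def]; ring
          rw [h1, h2, h3, Real.div_rpow (by positivity) (le_of_lt ha0)]
          have hat : (0:ℝ) < a ^ t := Real.rpow_pos_of_pos ha0 t
          field_simp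
  
theorem poch_shift_abs_upper_bound (z : ℂ) (k n : ℕ) (hkn : k ≤ n) :
    ‖poch ((k : ℂ) + z) (n - k)‖ ≤
      (1 + (n : ℝ)) ^ ‖z‖ * (n.factorial / k.factorial : ℝ) := by
  have habs : ‖poch ((k : ℂ) + z) (n - k)‖ ≤
      ∏ i ∈ Finset.range (n - k), ((k : ℝ) + i + ‖z‖) := by
    rw [poch, norm_prod]
    apply Finset.prod_le_prod (fun i _ => by positivity)
    intro i _
    calc ‖(k : ℂ) + z + i‖ = ‖((k : ℂ) + i) + z‖ := by ring_nf
      _ ≤ ‖(k : ℂ) + (i : ℂ)‖ + ‖z‖ := norm_add_le _ _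
      _ = (k : ℝ) + i + ‖z‖ := by
          rw [← Nat.cast_add, Complex.norm_natCast]
          push_cast
          ring
  have := poch_real_bound ‖z‖ (norm_nonneg z) (n - k) k
  rw [Nat.add_sub_cancel' hkn] at this
  exact habs.trans this
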